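/- Let n, N ∈ ℕ with N ≥ 2 and let L̂ be a smooth real-valued function on invertible n×n real matrices. Then for a sequence of invertible matrices W₀, W₁, …, W_{N-1}, the following are equivalent: (a) for all η₀, η₁, …, η_N ∈ Matrix(n,ℝ) with η₀ = η_N = 0, the derivative at ε = 0 of Σ_{k=0}^{N-1} L̂(exp(−ε η_k) · W_k · exp(ε η_{k+1})) vanishes (i.e. (W_k) extremizes the reduced discrete action under the constrained variations δW_k = −η_k W_k + W_k η_{k+1}); (b) the discrete Euler–Poincaré equations hold: for every k = 1, …, N−1 and every η ∈ Matrix(n,ℝ), DL̂(W_k)(η · W_k) = DL̂(W_{k-1})(W_{k-1} · η). -/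

import Mathlib

open scoped ContDiff BigOperators

attribute [local instance] Matrix.normedAddCommGroup Matrix.normedSpace

namespace Stmt12

abbrev Mat (n : ℕ) := Matrix (Fin n) (Fin n) ℝ

section aux
attribute [-instance] Matrix.normedAddCommGroup Matrix.normedSpace
attribute [local instance] Matrix.linftyOpNormedRing Matrix.linftyOpNormedAlgebra

/-- Auxiliary: the derivative statement transported through the `L∞`-operator-norm
structure, where `Matrix` is a normed ring and `hasDerivAt_exp_smul_const` applies.
The conclusion is phrased via `slope` so it only mentions the topology, which is
definitionally the same for both norms. -/
lemma inner_slope {n : ℕ} (W A B : Mat n) :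
    Filter.Tendsto
      (slope (fun ε : ℝ =>
        NormedSpace.exp (-(ε • A)) * W * NormedSpace.exp (ε • B)) 0)
      (nhdsWithin 0 {(0:ℝ)}ᶜ) (nhds (-(A * W) + W * B)) := by
  have h3 := ((hasDerivAt_exp_smul_const (𝕂 := ℝ) (-A) (0:ℝ)).mul_const W).mul
    (hasDerivAt_exp_smul_const (𝕂 := ℝ) B (0:ℝ))
  have := hasDerivAt_iff_tendsto_slope.mp h3
  have e1 : (fun ε : ℝ => NormedSpace.exp (-(ε • A)) * W * NormedSpace.exp (ε • B))
      = (fun y : ℝ => NormedSpace.exp (y • -A) * W) * fun u : ℝ => NormedSpace.exp (u • B) := by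
    funext ε; simp [smul_neg]
  have e2 : -(A * W) + W * B = NormedSpace.exp ((0:ℝ) • -A) * -A * W * NormedSpace.exp ((0:ℝ) • B) +
      NormedSpace.exp ((0:ℝ) • -A) * W * (NormedSpace.exp ((0:ℝ) • B) * B) := by
    simp [NormedSpace.exp_zero]
  rw [e1, e2]
  exact this

end aux

lemma isOpen_units {n : ℕ} : IsOpen {W : Mat n | IsUnit W} := by
  have h : {W : Mat n | IsUnit W} = Matrix.det ⁻¹' {x : ℝ | x ≠ 0} := by
    ext A
    simp [Matrix.isUnit_iff_isUnit_det, isUnit_iff_ne_zero]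
  rw [h]
  exact isOpen_ne.preimage continuous_id.matrix_det

lemma key {n : ℕ} {L : Mat n → ℝ} {W : Mat n}
    (hd : DifferentiableAt ℝ L W) (A B : Mat n) :
    HasDerivAt (fun ε : ℝ =>
      L (NormedSpace.exp (-(ε • A)) * W * NormedSpace.exp (ε • B)))
      (fderiv ℝ L W (-(A * W) + W * B)) 0 := by
  have h3 : HasDerivAt (fun ε : ℝ =>
      NormedSpace.exp (-(ε • A)) * W * NormedSpace.exp (ε • B))
      (-(A * W) + W * B) 0 := by
    exact hasDerivAt_iff_tendsto_slope.mpr (inner_slope W A B)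
  have hF : HasFDerivAt L (fderiv ℝ L W)
      ((fun ε : ℝ => NormedSpace.exp (-(ε • A)) * W * NormedSpace.exp (ε • B)) 0) := by
    simp only [zero_smul, neg_zero, NormedSpace.exp_zero, one_mul, mul_one]
    exact hd.hasFDerivAt
  exact hF.comp_hasDerivAt 0 h3

/-- **Discrete Euler–Poincaré equations (reduced form).**  A sequence
`W₀, …, W_{N-1}` of invertible matrices extremizes the reduced discrete action
under the constrained variations `δW_k = −η_k W_k + W_k η_{k+1}` (with
`η₀ = η_N = 0`) if and only if the discrete Euler–Poincaré equations hold. -/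
theorem discrete_euler_poincare_reduced
    {n N : ℕ} (hN : 2 ≤ N)
    (L : Mat n → ℝ)
    (hL : ContDiffOn ℝ ∞ L {W : Mat n | IsUnit W})
    (W : ℕ → Mat n) (hW : ∀ k, IsUnit (W k)) :
    (∀ η : ℕ → Mat n, η 0 = 0 → η N = 0 →
        deriv (fun ε : ℝ =>
          ∑ k ∈ Finset.range N,
            L (NormedSpace.exp (-(ε • η k)) * W k
                * NormedSpace.exp (ε • η (k + 1)))) 0 = 0)
      ↔ ∀ k : ℕ, 1 ≤ k → k ≤ N - 1 → ∀ η : Mat n,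
          fderiv ℝ L (W k) (η * W k)
            = fderiv ℝ L (W (k - 1)) (W (k - 1) * η) := by
  have hdiff : ∀ k, DifferentiableAt ℝ L (W k) := fun k =>
    (hL.contDiffAt (isOpen_units.mem_nhds (hW k))).differentiableAt
      (by simp)
  have hderiv : ∀ η : ℕ → Mat n,
      deriv (fun ε : ℝ => ∑ k ∈ Finset.range N,
        L (NormedSpace.exp (-(ε • η k)) * W k
            * NormedSpace.exp (ε • η (k + 1)))) 0
      = ∑ k ∈ Finset.range N,
          fderiv ℝ L (W k) (-(η k * W k) + W k * η (k + 1)) := by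
    intro η
    exact (HasDerivAt.fun_sum fun k _ => key (hdiff k) (η k) (η (k + 1))).deriv
  constructor
  · intro H k hk1 hk2 η
    have hkN : k < N := by omega
    set η' : ℕ → Mat n := fun j => if j = k then η else 0 with hη'
    have h0 : η' 0 = 0 := by simp [hη']; omega
    have hNz : η' N = 0 := by simp [hη']; omega
    have hsum := H η' h0 hNz
    rw [hderiv] at hsum
    have hsplit : ∀ j ∈ Finset.range N,
        fderiv ℝ L (W j) (-(η' j * W j) + W j * η' (j + 1))
        = -(fderiv ℝ L (W j) (η' j * W j)) + fderiv ℝ L (W j) (W j * η' (j + 1)) := by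
      intro j _; rw [map_add, map_neg]
    rw [Finset.sum_congr rfl hsplit, Finset.sum_add_distrib] at hsum
    have e1 : ∑ j ∈ Finset.range N, -(fderiv ℝ L (W j) (η' j * W j))
        = -(fderiv ℝ L (W k) (η * W k)) := by
      rw [Finset.sum_eq_single_of_mem k (Finset.mem_range.mpr hkN)]
      · simp [hη']
      · intro j _ hj; simp [hη', hj]
    have e2 : ∑ j ∈ Finset.range N, fderiv ℝ L (W j) (W j * η' (j + 1))
        = fderiv ℝ L (W (k - 1)) (W (k - 1) * η) := by
      rw [Finset.sum_eq_single_of_mem (k - 1) (Finset.mem_range.mpr (by omega))]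
      · have : k - 1 + 1 = k := by omega
        simp [hη', this]
      · intro j _ hj
        have : j + 1 ≠ k := by omega
        simp [hη', this]
    rw [e1, e2] at hsum
    linarith
  · intro H η h0 hNz
    rw [hderiv]
    set a : ℕ → ℝ := fun j => fderiv ℝ L (W j) (η j * W j) with ha
    have hterm : ∀ j ∈ Finset.range N,
        fderiv ℝ L (W j) (-(η j * W j) + W j * η (j + 1)) = a (j + 1) - a j := by
      intro j hj
      rw [map_add, map_neg]
      have hb : fderiv ℝ L (W j) (W j * η (j + 1)) = a (j + 1) := by
        rcases eq_or_ne (j + 1) N with h | h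
        · simp [ha, h, hNz]
        · have hle : j + 1 ≤ N - 1 := by
            have := Finset.mem_range.mp hj; omega
          have := (H (j + 1) (by omega) hle (η (j + 1))).symm
          simpa [ha] using this
      rw [hb]; ring
    rw [Finset.sum_congr rfl hterm, Finset.sum_range_sub]
    simp [ha, h0, hNz]

end Stmt12
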